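/- Let p be an odd prime, let n_1, …, n_m be positive integers, and let l = n_1 + ⋯ + n_m. Then v_p((n_1!)²⋯(n_m!)² / ((2n_1+1)!⋯(2n_m+1)!)) ≥ −2l/(p−1), as an inequality of rational numbers, and equality holds if and only if n_i = (p−1)/2 for every i = 1, …, m. -/

import Mathlib

private lemma digits_sum_pos {p m : ℕ} (hp : 2 ≤ p) (hm : m ≠ 0) :
    0 < (p.digits m).sum := by
  have hne : p.digits m ≠ [] := Nat.digits_ne_nil_iff_ne_zero.mpr hm
  have hlast : (p.digits m).getLast hne ≠ 0 := Nat.getLast_digit_ne_zero p hm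
  have hmem : (p.digits m).getLast hne ∈ p.digits m := List.getLast_mem hne
  have := List.single_le_sum (fun x _ => Nat.zero_le x) _ hmem
  omega

private lemma digits_sum_eq_self_iff {p : ℕ} (hp : p.Prime) (n : ℕ) :
    (p.digits n).sum = n ↔ n < p := by
  haveI := Fact.mk hp
  constructor
  · intro h
    by_contra hc
    push_neg at hc
    have hdvd : p ∣ n.factorial := Nat.dvd_factorial hp.pos hc
    have hv : 1 ≤ padicValNat p n.factorial :=
      one_le_padicValNat_of_dvd (Nat.factorial_pos n).ne' hdvd
    have hL := sub_one_mul_padicValNat_factorial (hp := Fact.mk hp) (p := p) n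
    have hle := Nat.digit_sum_le p n
    have h2 := hp.two_le
    have : p - 1 ≤ (p - 1) * padicValNat p n.factorial := Nat.le_mul_of_pos_right _ hv
    omega
  · intro h
    rcases Nat.eq_zero_or_pos n with rfl | hn
    · simp
    · rw [Nat.digits_def' hp.one_lt hn, Nat.mod_eq_of_lt h, Nat.div_eq_of_lt h]
      simp

private lemma key_iff {p n : ℕ} (hp : p.Prime) (hodd : p ≠ 2) (hn : 1 ≤ n) :
    ((p.digits n).sum = n ∧ (p.digits (2 * n + 1)).sum = 1) ↔ n = (p - 1) / 2 := by
  have h2 := hp.two_le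
  have h3 : 3 ≤ p := by
    rcases Nat.lt_or_ge p 3 with h | h
    · interval_cases p <;> simp_all
    · exact h
  have hpodd : p % 2 = 1 := Nat.odd_iff.mp (hp.odd_of_ne_two hodd)
  constructor
  · rintro ⟨h1, h2'⟩
    have hnp : n < p := (digits_sum_eq_self_iff hp n).mp h1
    have hm : 2 * n + 1 < p * p := by nlinarith
    rcases Nat.lt_or_ge (2 * n + 1) p with hlt | hge
    · have := (digits_sum_eq_self_iff hp (2 * n + 1)).mpr hlt
      omega
    · set M := 2 * n + 1 with hM
      have hMpos : 0 < M := by omega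
      have hd1 : p.digits M = M % p :: p.digits (M / p) := Nat.digits_def' hp.one_lt hMpos
      have hq1 : 1 ≤ M / p := Nat.one_le_div_iff hp.pos |>.mpr hge
      have hq2 : M / p < p := Nat.div_lt_of_lt_mul hm
      have hd2 : p.digits (M / p) = [M / p] := by
        rw [Nat.digits_def' hp.one_lt (by omega), Nat.mod_eq_of_lt hq2,
          Nat.div_eq_of_lt hq2]
        simp
      rw [hd1, hd2] at h2'
      simp at h2'
      have hq3 : M / p = 1 := by omega
      have hq4 : M % p = 0 := by omega
      have hMe : M = p * (M / p) + M % p := (Nat.div_add_mod M p).symm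
      rw [hq3, hq4] at hMe
      omega
  · rintro rfl
    have h2n : 2 * ((p - 1) / 2) + 1 = p := by omega
    constructor
    · exact (digits_sum_eq_self_iff hp _).mpr (by omega)
    · rw [h2n, Nat.digits_def' hp.one_lt hp.pos, Nat.mod_self, Nat.div_self hp.pos,
        Nat.digits_def' hp.one_lt Nat.one_pos, Nat.mod_eq_of_lt hp.one_lt,
        Nat.div_eq_of_lt hp.one_lt]
      simp

private lemma term_key {p : ℕ} (hp : p.Prime) (hodd : p ≠ 2) {n : ℕ} (hn : 1 ≤ n) :
    0 ≤ ((p : ℤ) - 1) * (2 * padicValNat p n.factorial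
        - padicValNat p (2 * n + 1).factorial) + 2 * n ∧
      (((p : ℤ) - 1) * (2 * padicValNat p n.factorial
        - padicValNat p (2 * n + 1).factorial) + 2 * n = 0 ↔ n = (p - 1) / 2) := by
  haveI := Fact.mk hp
  have h2 := hp.two_le
  set s1 := (p.digits n).sum with hs1def
  set s2 := (p.digits (2 * n + 1)).sum with hs2def
  have hle1 : s1 ≤ n := Nat.digit_sum_le p n
  have hle2 : s2 ≤ 2 * n + 1 := Nat.digit_sum_le p (2 * n + 1)
  have hpos2 : 0 < s2 := digits_sum_pos h2 (by omega)
  have hL1 : (p - 1) * padicValNat p n.factorial = n - s1 :=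
    sub_one_mul_padicValNat_factorial n
  have hL2 : (p - 1) * padicValNat p (2 * n + 1).factorial = (2 * n + 1) - s2 :=
    sub_one_mul_padicValNat_factorial (2 * n + 1)
  have hL1' : ((p : ℤ) - 1) * (padicValNat p n.factorial : ℤ) = (n : ℤ) - s1 := by
    have h := congrArg (Nat.cast (R := ℤ)) hL1
    simp only [Nat.cast_mul, Nat.cast_sub hp.one_le, Nat.cast_sub hle1, Nat.cast_one] at h
    exact h
  have hL2' : ((p : ℤ) - 1) * (padicValNat p (2 * n + 1).factorial : ℤ)
      = 2 * (n : ℤ) + 1 - s2 := by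
    have h := congrArg (Nat.cast (R := ℤ)) hL2
    simp only [Nat.cast_mul, Nat.cast_sub hp.one_le, Nat.cast_sub hle2, Nat.cast_one,
      Nat.cast_add, Nat.cast_ofNat] at h
    linarith
  have hexpr : ((p : ℤ) - 1) * (2 * padicValNat p n.factorial
      - padicValNat p (2 * n + 1).factorial) + 2 * n
      = ((s2 : ℤ) - 1) + 2 * ((n : ℤ) - s1) := by
    linear_combination 2 * hL1' - hL2'
  rw [hexpr]
  have hi1 : (1 : ℤ) ≤ s2 := by exact_mod_cast hpos2
  have hi2 : (s1 : ℤ) ≤ n := by exact_mod_cast hle1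
  constructor
  · omega
  · rw [← key_iff hp hodd hn]
    constructor
    · intro h
      constructor
      · have : (s1 : ℤ) = n := by omega
        have h' : s1 = n := by exact_mod_cast this
        rw [hs1def] at h'
        exact h'
      · have : (s2 : ℤ) = 1 := by omega
        have h' : s2 = 1 := by exact_mod_cast this
        rw [hs2def] at h'
        exact h'
    · rintro ⟨e1, e2⟩
      have e1' : (s1 : ℤ) = n := by rw [hs1def]; exact_mod_cast e1
      have e2' : (s2 : ℤ) = 1 := by rw [hs2def]; exact_mod_cast e2
      rw [e1', e2']
      ring

private lemma padicValNat_prod {p : ℕ} (hp : p.Prime) {ι : Type*} (s : Finset ι)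
    (g : ι → ℕ) (h : ∀ i ∈ s, g i ≠ 0) :
    padicValNat p (∏ i ∈ s, g i) = ∑ i ∈ s, padicValNat p (g i) := by
  simp only [← Nat.factorization_def _ hp, Nat.factorization_prod h, Finset.sum_apply']

theorem padicValRat_prod_factorial_sq_div_ge (p : ℕ) (hp : p.Prime) (hodd : p ≠ 2)
    (m : ℕ) (hm : 1 ≤ m) (n : Fin m → ℕ) (hn : ∀ i, 1 ≤ n i) (l : ℕ) (hl : l = ∑ i, n i) :
    -(2 * (l : ℚ) / ((p : ℚ) - 1)) ≤
        ((padicValRat p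
            ((∏ i, ((n i).factorial : ℚ) ^ 2) / ∏ i, ((2 * n i + 1).factorial : ℚ)) : ℚ)) ∧
      (((padicValRat p
            ((∏ i, ((n i).factorial : ℚ) ^ 2) / ∏ i, ((2 * n i + 1).factorial : ℚ)) : ℚ)) =
          -(2 * (l : ℚ) / ((p : ℚ) - 1)) ↔ ∀ i, n i = (p - 1) / 2) := by
  haveI := Fact.mk hp
  have h2 := hp.two_le
  set A : ℕ := ∏ i, ((n i).factorial) ^ 2 with hAdef
  set B : ℕ := ∏ i, (2 * n i + 1).factorial with hBdef
  have hA : A ≠ 0 := by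
    apply Finset.prod_ne_zero_iff.mpr
    intro i _
    positivity
  have hB : B ≠ 0 := by
    apply Finset.prod_ne_zero_iff.mpr
    intro i _
    exact (Nat.factorial_pos _).ne'
  have hcastA : (∏ i, ((n i).factorial : ℚ) ^ 2) = (A : ℚ) := by
    simp [hAdef]
  have hcastB : (∏ i, ((2 * n i + 1).factorial : ℚ)) = (B : ℚ) := by
    simp [hBdef]
  have hvalA : padicValNat p A = ∑ i, 2 * padicValNat p ((n i).factorial) := by
    rw [hAdef, padicValNat_prod hp _ _ (fun i _ => by positivity)]
    exact Finset.sum_congr rfl fun i _ => padicValNat.pow _ 2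
  have hvalB : padicValNat p B = ∑ i, padicValNat p ((2 * n i + 1).factorial) :=
    padicValNat_prod hp _ _ (fun i _ => (Nat.factorial_pos _).ne')
  set V : ℤ := (padicValNat p A : ℤ) - padicValNat p B with hVdef
  have hval : padicValRat p
      ((∏ i, ((n i).factorial : ℚ) ^ 2) / ∏ i, ((2 * n i + 1).factorial : ℚ)) = V := by
    rw [hcastA, hcastB, padicValRat.div (by exact_mod_cast hA) (by exact_mod_cast hB),
      padicValRat.of_nat, padicValRat.of_nat]
  have hVsum : V = ∑ i, (2 * (padicValNat p ((n i).factorial) : ℤ)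
      - padicValNat p ((2 * n i + 1).factorial)) := by
    rw [hVdef, hvalA, hvalB, Nat.cast_sum, Nat.cast_sum, ← Finset.sum_sub_distrib]
    refine Finset.sum_congr rfl fun i _ => ?_
    rw [Nat.cast_mul, Nat.cast_ofNat]
  have hsum : ((p : ℤ) - 1) * V + 2 * l
      = ∑ i, (((p : ℤ) - 1) * (2 * padicValNat p ((n i).factorial)
          - padicValNat p ((2 * n i + 1).factorial)) + 2 * n i) := by
    rw [Finset.sum_add_distrib, ← Finset.mul_sum, ← hVsum, ← Finset.mul_sum, hl,
      Nat.cast_sum]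
  have hterm := fun i : Fin m => term_key hp hodd (hn i)
  have hnonneg : 0 ≤ ((p : ℤ) - 1) * V + 2 * l := by
    rw [hsum]
    exact Finset.sum_nonneg fun i _ => (hterm i).1
  have heqiff : ((p : ℤ) - 1) * V + 2 * l = 0 ↔ ∀ i, n i = (p - 1) / 2 := by
    rw [hsum, Finset.sum_eq_zero_iff_of_nonneg (fun i _ => (hterm i).1)]
    constructor
    · intro h i
      exact ((hterm i).2).mp (h i (Finset.mem_univ i))
    · intro h i _
      exact ((hterm i).2).mpr (h i)
  have hc : (0 : ℚ) < (p : ℚ) - 1 := by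
    have : (2 : ℚ) ≤ (p : ℚ) := by exact_mod_cast h2
    linarith
  rw [hval]
  constructor
  · rw [← neg_div, div_le_iff₀ hc]
    have h0 : (0 : ℚ) ≤ ((((p : ℤ) - 1) * V + 2 * l : ℤ) : ℚ) := by exact_mod_cast hnonneg
    push_cast at h0
    push_cast
    linarith
  · rw [← neg_div, eq_div_iff hc.ne', ← heqiff]
    constructor
    · intro h
      have h0 : ((((p : ℤ) - 1) * V + 2 * l : ℤ) : ℚ) = 0 := by
        push_cast
        push_cast at h
        linarith
      exact_mod_cast h0
    · intro h
      have h0 : ((((p : ℤ) - 1) * V + 2 * l : ℤ) : ℚ) = 0 := by exact_mod_cast h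
      push_cast at h0 ⊢
      linarith
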